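/- Let K be a field, S an infinite set, T = K[x_i : i ∈ S], I = (x_i x_k : i ≠ k), 𝔪 = (x_i : i ∈ S), and R the localization of T/I at the maximal ideal 𝔪/I. Then R is a reduced local ring of Krull dimension 1 with infinitely many minimal primes, and R satisfies infinite prime absorbance: if a prime P of R contains an intersection ⋂_{k∈S'} P_k of a family of primes of R, then P contains some P_k. -/

import Mathlib

open MvPolynomial

variable (K S : Type*) [Field K]

/-- The ideal `I = (xᵢxₖ : i, k ∈ S, i ≠ k)` of `T = K[xᵢ : i ∈ S]`. -/
noncomputable def prodXIdeal : Ideal (MvPolynomial S K) :=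
  Ideal.span {f | ∃ i k : S, i ≠ k ∧ f = X i * X k}

/-- The ideal `𝔪 = (xᵢ : i ∈ S)` of `T`. -/
noncomputable def mxIdeal : Ideal (MvPolynomial S K) :=
  Ideal.span (Set.range X)

lemma mem_mxIdeal_iff (x : MvPolynomial S K) :
    x ∈ mxIdeal K S ↔ constantCoeff x = 0 := by
  rw [mxIdeal, ← Set.image_univ, mem_ideal_span_X_image, constantCoeff_eq]
  constructor
  · intro h
    by_contra hc
    obtain ⟨i, -, hi⟩ := h 0 (mem_support_iff.mpr hc)
    simp at hi
  · intro h m hm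
    by_contra hc
    push_neg at hc
    have hm0 : m = 0 := Finsupp.ext fun i => by simpa using hc i (Set.mem_univ i)
    rw [hm0] at hm
    exact mem_support_iff.mp hm h

lemma mxIdeal_eq_ker :
    mxIdeal K S = RingHom.ker (constantCoeff : MvPolynomial S K →+* K) := by
  ext x; exact mem_mxIdeal_iff K S x

lemma mxIdeal_isPrime : (mxIdeal K S).IsPrime := by
  rw [mxIdeal_eq_ker]
  exact RingHom.ker_isPrime _

lemma prodXIdeal_le_mxIdeal : prodXIdeal K S ≤ mxIdeal K S := by
  rw [prodXIdeal]
  refine Ideal.span_le.mpr ?_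
  rintro f ⟨i, k, -, rfl⟩
  exact Ideal.mul_mem_right _ _ (Ideal.subset_span ⟨i, rfl⟩)

/-- The maximal ideal `𝔪/I` of `T/I`. -/
noncomputable def mxBar : Ideal (MvPolynomial S K ⧸ prodXIdeal K S) :=
  (mxIdeal K S).map (Ideal.Quotient.mk (prodXIdeal K S))

instance mxBar_isPrime : (mxBar K S).IsPrime := by
  haveI := mxIdeal_isPrime K S
  exact Ideal.map_isPrime_of_surjective Ideal.Quotient.mk_surjective
    (by rw [Ideal.mk_ker]; exact prodXIdeal_le_mxIdeal K S)

section AuxStmt19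
variable {S}


/-- `I_k = (x_i : i ≠ k)`. -/
noncomputable def IkIdeal (k : S) : Ideal (MvPolynomial S K) :=
  Ideal.span (X '' {i | i ≠ k})

open Classical in
/-- the retraction `T → K[y]` sending `x_k ↦ y`, `x_i ↦ 0` for `i ≠ k`. -/
noncomputable def ekHom (k : S) : MvPolynomial S K →ₐ[K] Polynomial K :=
  aeval (fun i => if i = k then Polynomial.X else 0)

/-- the inclusion `K[y] → T`, `y ↦ x_k`. -/
noncomputable def ikHom (k : S) : Polynomial K →ₐ[K] MvPolynomial S K :=
  Polynomial.aeval (X k)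

lemma ek_ik (k : S) (g : Polynomial K) : ekHom K k (ikHom K k g) = g := by
  have : (ekHom K (S := S) k).comp (ikHom K k) = AlgHom.id K (Polynomial K) := by
    apply Polynomial.algHom_ext
    simp [ekHom, ikHom]
  calc ekHom K k (ikHom K k g) = ((ekHom K k).comp (ikHom K k)) g := rfl
    _ = g := by rw [this]; rfl

lemma sub_mem_Ik (k : S) (f : MvPolynomial S K) :
    f - ikHom K k (ekHom K k f) ∈ IkIdeal K k := by
  have : (Ideal.Quotient.mkₐ K (IkIdeal K k)).comp ((ikHom K k).comp (ekHom K k)) =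
      Ideal.Quotient.mkₐ K (IkIdeal K k) := by
    apply MvPolynomial.algHom_ext
    intro i
    by_cases h : i = k
    · subst h; simp [ekHom, ikHom]
    · simp only [AlgHom.comp_apply, ekHom, ikHom, aeval_X, if_neg h, map_zero]
      symm
      rw [Ideal.Quotient.mkₐ_eq_mk, Ideal.Quotient.eq_zero_iff_mem]
      exact Ideal.subset_span ⟨i, h, rfl⟩
  have h2 : Ideal.Quotient.mk (IkIdeal K k) (ikHom K k (ekHom K k f)) =
      Ideal.Quotient.mk (IkIdeal K k) f := by
    have := congrArg (fun φ => φ f) this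
    simpa using this
  exact (Ideal.Quotient.eq).mp h2.symm

lemma Ik_eq_ker (k : S) : IkIdeal K k = RingHom.ker (ekHom K k : MvPolynomial S K →+* Polynomial K) := by
  apply le_antisymm
  · rw [IkIdeal, Ideal.span_le]
    rintro f ⟨i, hi, rfl⟩
    simp only [Set.mem_setOf_eq] at hi
    simp [RingHom.mem_ker, ekHom, hi]
  · intro f hf
    have h0 : ekHom K k f = 0 := hf
    have := sub_mem_Ik K k f
    rwa [h0, map_zero, sub_zero] at this

lemma Ik_isPrime (k : S) : (IkIdeal K (S := S) k).IsPrime := by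
  rw [Ik_eq_ker]; exact RingHom.ker_isPrime _

lemma X_not_mem_Ik (k : S) : X k ∉ IkIdeal K (S := S) k := by
  rw [Ik_eq_ker]
  intro h
  have : (Polynomial.X : Polynomial K) = 0 := by
    simpa [ekHom] using h
  exact Polynomial.X_ne_zero this

lemma X_mem_Ik {i k : S} (h : i ≠ k) : X i ∈ IkIdeal K (S := S) k :=
  Ideal.subset_span ⟨i, h, rfl⟩

lemma Ik_le_mx (k : S) : IkIdeal K (S := S) k ≤ mxIdeal K S := by
  rw [IkIdeal, Ideal.span_le]
  rintro f ⟨i, -, rfl⟩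
  exact Ideal.subset_span ⟨i, rfl⟩

lemma prodX_le_Ik (k : S) : prodXIdeal K S ≤ IkIdeal K k := by
  rw [prodXIdeal, Ideal.span_le]
  rintro f ⟨i, j, hij, rfl⟩
  by_cases h : i = k
  · subst h
    exact Ideal.mul_mem_left _ _ (X_mem_Ik K (Ne.symm hij))
  · exact Ideal.mul_mem_right _ _ (X_mem_Ik K h)

lemma constantCoeff_ik (k : S) (g : Polynomial K) :
    constantCoeff (ikHom K (S := S) k g) = g.coeff 0 := by
  have h1 : constantCoeff (ikHom K (S := S) k g) = eval (0 : S → K) (ikHom K k g) := by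
    rw [eval_zero]
  rw [h1, ikHom, Polynomial.aeval_def, Polynomial.hom_eval₂]
  have h2 : (eval (0 : S → K)).comp (algebraMap K (MvPolynomial S K)) = RingHom.id K := by
    ext a; simp
  have h3 : eval (0 : S → K) (X k) = 0 := by simp
  rw [h2, h3, ← Polynomial.eval, Polynomial.coeff_zero_eq_eval_zero]

lemma Ik_le_of_prime (k : S) (q : Ideal (MvPolynomial S K)) (hq : q.IsPrime)
    (hI : prodXIdeal K S ≤ q) (hk : X k ∉ q) : IkIdeal K k ≤ q := by
  rw [IkIdeal, Ideal.span_le]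
  rintro x ⟨i, hi, rfl⟩
  simp only [Set.mem_setOf_eq] at hi
  have hx : X i * X k ∈ q := hI (Ideal.subset_span ⟨i, k, hi, rfl⟩)
  rcases hq.mem_or_mem hx with h | h
  · exact h
  · exact absurd h hk

lemma ik_mem_eq_zero (k : S) (q : Ideal (MvPolynomial S K)) (hq : q.IsPrime)
    (hqm : q ≤ mxIdeal K S) (hk : X k ∉ q) :
    ∀ g : Polynomial K, ikHom K k g ∈ q → g = 0 := by
  suffices h : ∀ n, ∀ g : Polynomial K, g.natDegree ≤ n → ikHom K k g ∈ q → g = 0 by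
    intro g; exact h g.natDegree g le_rfl
  intro n
  induction n with
  | zero =>
    intro g hg hmem
    have h0 : g.coeff 0 = 0 := by
      rw [← constantCoeff_ik K k g, ← mem_mxIdeal_iff]; exact hqm hmem
    rw [Polynomial.eq_C_of_natDegree_le_zero hg, h0, map_zero]
  | succ n IH =>
    intro g hg hmem
    by_cases hg0 : g = 0
    · exact hg0
    have h0 : g.coeff 0 = 0 := by
      rw [← constantCoeff_ik K k g, ← mem_mxIdeal_iff]; exact hqm hmem
    obtain ⟨g1, rfl⟩ := Polynomial.X_dvd_iff.mpr h0
    have hg1 : g1 ≠ 0 := fun h => hg0 (by simp [h])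
    have hmem1 : ikHom K k g1 ∈ q := by
      have hm : X k * ikHom K k g1 ∈ q := by
        have : ikHom K k (Polynomial.X * g1) = X k * ikHom K k g1 := by
          simp [ikHom]
        rwa [this] at hmem
      rcases hq.mem_or_mem hm with h | h
      · exact absurd h hk
      · exact h
    have hdeg : g1.natDegree ≤ n := by
      have := Polynomial.natDegree_X_mul hg1
      omega
    rw [IH g1 hdeg hmem1, mul_zero]

lemma eq_Ik_of_prime (k : S) (q : Ideal (MvPolynomial S K)) (hq : q.IsPrime)
    (hI : prodXIdeal K S ≤ q) (hqm : q ≤ mxIdeal K S) (hk : X k ∉ q) :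
    q = IkIdeal K k := by
  refine le_antisymm ?_ (Ik_le_of_prime K k q hq hI hk)
  intro f hf
  have hsub := sub_mem_Ik K k f
  have hι : ikHom K k (ekHom K k f) ∈ q := by
    have := q.sub_mem hf (Ik_le_of_prime K k q hq hI hk hsub)
    simpa using this
  have h0 := ik_mem_eq_zero K k q hq hqm hk (ekHom K k f) hι
  rwa [h0, map_zero, sub_zero] at hsub

lemma prime_classify (q : Ideal (MvPolynomial S K)) (hq : q.IsPrime)
    (hI : prodXIdeal K S ≤ q) (hqm : q ≤ mxIdeal K S) :
    q = mxIdeal K S ∨ ∃ k, X k ∉ q ∧ q = IkIdeal K k := by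
  by_cases h : ∀ i : S, X i ∈ q
  · left
    refine le_antisymm hqm ?_
    rw [mxIdeal, Ideal.span_le]
    rintro x ⟨i, rfl⟩
    exact h i
  · right
    push_neg at h
    obtain ⟨k, hk⟩ := h
    exact ⟨k, hk, eq_Ik_of_prime K k q hq hI hqm hk⟩

lemma prodXIdeal_eq_span_monomial :
    prodXIdeal K S = Ideal.span ((fun s => monomial s (1 : K)) ''
      {m : S →₀ ℕ | ∃ i j : S, i ≠ j ∧ m = Finsupp.single i 1 + Finsupp.single j 1}) := by
  rw [prodXIdeal]
  congr 1
  ext f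
  constructor
  · rintro ⟨i, j, hij, rfl⟩
    exact ⟨Finsupp.single i 1 + Finsupp.single j 1, ⟨i, j, hij, rfl⟩, by
      rw [X, X, monomial_mul, one_mul]⟩
  · rintro ⟨m, ⟨i, j, hij, rfl⟩, rfl⟩
    exact ⟨i, j, hij, by rw [X, X, monomial_mul, one_mul]⟩

lemma mem_prodXIdeal_iff (f : MvPolynomial S K) :
    f ∈ prodXIdeal K S ↔ ∀ m ∈ f.support, ∃ i j : S, i ≠ j ∧ m i ≠ 0 ∧ m j ≠ 0 := by
  rw [prodXIdeal_eq_span_monomial, mem_ideal_span_monomial_image]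
  refine forall₂_congr fun m _ => ?_
  constructor
  · rintro ⟨si, ⟨i, j, hij, rfl⟩, hle⟩
    refine ⟨i, j, hij, ?_, ?_⟩
    · have h := Finsupp.le_def.mp hle i
      rw [Finsupp.add_apply, Finsupp.single_eq_same,
        Finsupp.single_eq_of_ne' (Ne.symm hij)] at h
      omega
    · have h := Finsupp.le_def.mp hle j
      rw [Finsupp.add_apply, Finsupp.single_eq_same, Finsupp.single_eq_of_ne' hij] at h
      omega
  · rintro ⟨i, j, hij, hi, hj⟩
    refine ⟨Finsupp.single i 1 + Finsupp.single j 1, ⟨i, j, hij, rfl⟩, ?_⟩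
    rw [Finsupp.le_def]
    intro l
    rw [Finsupp.add_apply]
    rcases eq_or_ne i l with rfl | hil
    · rw [Finsupp.single_eq_same, Finsupp.single_eq_of_ne' (fun h => hij h.symm)]
      omega
    · rw [Finsupp.single_eq_of_ne' hil]
      rcases eq_or_ne j l with rfl | hjl
      · rw [Finsupp.single_eq_same]; omega
      · rw [Finsupp.single_eq_of_ne' hjl]; omega

lemma mem_Ik_iff (k : S) (f : MvPolynomial S K) :
    f ∈ IkIdeal K k ↔ ∀ m ∈ f.support, ∃ i : S, i ≠ k ∧ (m : S →₀ ℕ) i ≠ 0 := by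
  rw [IkIdeal, mem_ideal_span_X_image]
  simp only [Set.mem_setOf_eq]

lemma prodXIdeal_eq_iInf [Infinite S] :
    prodXIdeal K S = ⨅ k : S, IkIdeal K k := by
  refine le_antisymm (le_iInf fun k => prodX_le_Ik K k) ?_
  intro f hf
  simp only [Ideal.mem_iInf] at hf
  rw [mem_prodXIdeal_iff]
  intro m hm
  obtain ⟨k₀⟩ := (inferInstance : Nonempty S)
  obtain ⟨i, hik, hi⟩ := (mem_Ik_iff K k₀ f).mp (hf k₀) m hm
  obtain ⟨j, hji, hj⟩ := (mem_Ik_iff K i f).mp (hf i) m hm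
  exact ⟨j, i, hji, hj, hi⟩

lemma prodXIdeal_isRadical [Infinite S] : (prodXIdeal K S).IsRadical := by
  rw [prodXIdeal_eq_iInf]
  exact Ideal.isRadical_iInf _ fun k => (Ik_isPrime K k).isRadical

lemma quotient_reduced [Infinite S] : IsReduced (MvPolynomial S K ⧸ prodXIdeal K S) :=
  (Ideal.isRadical_iff_quotient_reduced _).mp (prodXIdeal_isRadical K)


/-- `P_k = I_k / I` in `T/I`. -/
noncomputable def PkBar (k : S) : Ideal (MvPolynomial S K ⧸ prodXIdeal K S) :=
  (IkIdeal K k).map (Ideal.Quotient.mk (prodXIdeal K S))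

lemma comap_PkBar (k : S) :
    (PkBar K k).comap (Ideal.Quotient.mk (prodXIdeal K S)) = IkIdeal K k := by
  rw [PkBar, Ideal.comap_map_of_surjective _ Ideal.Quotient.mk_surjective]
  rw [← RingHom.ker_eq_comap_bot, Ideal.mk_ker]
  exact sup_eq_left.mpr (prodX_le_Ik K k)

lemma PkBar_isPrime (k : S) : (PkBar K k).IsPrime := by
  haveI := Ik_isPrime K (S := S) k
  exact Ideal.map_isPrime_of_surjective Ideal.Quotient.mk_surjective
    (by rw [Ideal.mk_ker]; exact prodX_le_Ik K k)

lemma comap_mxBar :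
    (mxBar K S).comap (Ideal.Quotient.mk (prodXIdeal K S)) = mxIdeal K S := by
  rw [mxBar, Ideal.comap_map_of_surjective _ Ideal.Quotient.mk_surjective]
  rw [← RingHom.ker_eq_comap_bot, Ideal.mk_ker]
  exact sup_eq_left.mpr (prodXIdeal_le_mxIdeal K S)

lemma PkBar_le_mxBar (k : S) : PkBar K k ≤ mxBar K S :=
  Ideal.map_mono (Ik_le_mx K k)

lemma mkX_mem_mxBar (k : S) :
    Ideal.Quotient.mk (prodXIdeal K S) (X k) ∈ mxBar K S :=
  Ideal.mem_map_of_mem _ (Ideal.subset_span ⟨k, rfl⟩)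

lemma mkX_mem_PkBar {j k : S} (h : j ≠ k) :
    Ideal.Quotient.mk (prodXIdeal K S) (X j) ∈ PkBar K k :=
  Ideal.mem_map_of_mem _ (X_mem_Ik K h)

lemma mkX_not_mem_PkBar (k : S) :
    Ideal.Quotient.mk (prodXIdeal K S) (X k) ∉ PkBar K k := by
  intro h
  exact X_not_mem_Ik K k (by rw [← comap_PkBar K k]; exact h)

lemma classify_bar (q : Ideal (MvPolynomial S K ⧸ prodXIdeal K S)) (hq : q.IsPrime)
    (hqm : q ≤ mxBar K S) : q = mxBar K S ∨ ∃ k, q = PkBar K k := by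
  set Q := Ideal.Quotient.mk (prodXIdeal K S)
  have hker : prodXIdeal K S ≤ q.comap Q := by
    intro x hx
    simp only [Ideal.mem_comap]
    rw [show Q x = 0 from (Ideal.Quotient.eq_zero_iff_mem).mpr hx]
    exact q.zero_mem
  have hcp : (q.comap Q).IsPrime := hq.comap Q
  have hcm : q.comap Q ≤ mxIdeal K S := by
    rw [← comap_mxBar K]
    exact Ideal.comap_mono hqm
  have hmapq : (q.comap Q).map Q = q := Ideal.map_comap_of_surjective Q Ideal.Quotient.mk_surjective q
  rcases prime_classify K (q.comap Q) hcp hker hcm with h | ⟨k, -, h⟩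
  · left; rw [← hmapq, h]; rfl
  · right; exact ⟨k, by rw [← hmapq, h]; rfl⟩

lemma PkBar_le_PkBar {j k : S} (h : PkBar K j ≤ PkBar K k) : j = k := by
  by_contra hjk
  exact X_not_mem_Ik K k <| by
    rw [← comap_PkBar K k]
    exact (Ideal.comap_mono h) (by rw [comap_PkBar K j]; exact X_mem_Ik K (Ne.symm hjk))

lemma not_mxBar_le_PkBar (k : S) : ¬ mxBar K S ≤ PkBar K k := fun h =>
  mkX_not_mem_PkBar K k (h (mkX_mem_mxBar K k))

lemma PkBar_ne_mxBar (k : S) : PkBar K k ≠ mxBar K S := fun h =>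
  not_mxBar_le_PkBar K k (h ▸ le_refl _)

section Loc

local notation "L" => Localization.AtPrime (mxBar K S)
local notation "QQ" => MvPolynomial S K ⧸ prodXIdeal K S

lemma disjoint_of_le {p : Ideal QQ} (hp : p ≤ mxBar K S) :
    Disjoint ((mxBar K S).primeCompl : Set QQ) (p : Set QQ) := by
  rw [Set.disjoint_left]
  intro x hx hxp
  exact hx (hp hxp)

/-- `P_k` as a prime of the localization. -/
noncomputable def PkLoc (k : S) : Ideal L :=
  (PkBar K k).map (algebraMap QQ L)

variable (S) in
/-- the maximal ideal of the localization. -/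
noncomputable def MLoc : Ideal L :=
  (mxBar K S).map (algebraMap QQ L)

lemma PkLoc_isPrime (k : S) : (PkLoc K k).IsPrime :=
  IsLocalization.isPrime_of_isPrime_disjoint (mxBar K S).primeCompl L (PkBar K k)
    (PkBar_isPrime K k) (disjoint_of_le K (PkBar_le_mxBar K k))

lemma MLoc_isPrime : (MLoc K S).IsPrime :=
  IsLocalization.isPrime_of_isPrime_disjoint (mxBar K S).primeCompl L (mxBar K S)
    (mxBar_isPrime K S) (disjoint_of_le K le_rfl)

lemma comap_PkLoc (k : S) : (PkLoc K k).comap (algebraMap QQ L) = PkBar K k :=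
  IsLocalization.comap_map_of_isPrime_disjoint _ L (I := PkBar K k)
    (PkBar_isPrime K k) (disjoint_of_le K (PkBar_le_mxBar K k))

lemma comap_MLoc : (MLoc K S).comap (algebraMap QQ L) = mxBar K S :=
  IsLocalization.comap_map_of_isPrime_disjoint _ L (I := mxBar K S)
    (mxBar_isPrime K S) (disjoint_of_le K le_rfl)

lemma comap_prime_le_mxBar (p : Ideal L) (hp : p.IsPrime) :
    (p.comap (algebraMap QQ L)).IsPrime ∧ p.comap (algebraMap QQ L) ≤ mxBar K S := by
  have h := (IsLocalization.isPrime_iff_isPrime_disjoint (mxBar K S).primeCompl L p).mp hp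
  refine ⟨h.1, fun x hx => ?_⟩
  by_contra hxm
  exact Set.disjoint_left.mp h.2 (show x ∈ (mxBar K S).primeCompl from hxm) hx

lemma classify_loc (p : Ideal L) (hp : p.IsPrime) :
    p = MLoc K S ∨ ∃ k, p = PkLoc K k := by
  obtain ⟨h1, h2⟩ := comap_prime_le_mxBar K p hp
  have hmc : (p.comap (algebraMap QQ L)).map (algebraMap QQ L) = p :=
    IsLocalization.map_comap (mxBar K S).primeCompl L p
  rcases classify_bar K _ h1 h2 with h | ⟨k, h⟩
  · left; rw [← hmc, h]; rfl
  · right; exact ⟨k, by rw [← hmc, h]; rfl⟩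

lemma prime_le_MLoc (p : Ideal L) (hp : p.IsPrime) : p ≤ MLoc K S := by
  obtain ⟨-, h2⟩ := comap_prime_le_mxBar K p hp
  have hmc : (p.comap (algebraMap QQ L)).map (algebraMap QQ L) = p :=
    IsLocalization.map_comap (mxBar K S).primeCompl L p
  rw [← hmc]
  exact Ideal.map_mono h2

lemma PkLoc_le_PkLoc {j k : S} (h : PkLoc K j ≤ PkLoc K k) : j = k :=
  PkBar_le_PkBar K (by rw [← comap_PkLoc K j, ← comap_PkLoc K k]; exact Ideal.comap_mono h)

lemma not_MLoc_le_PkLoc (k : S) : ¬ MLoc K S ≤ PkLoc K k := fun h =>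
  not_mxBar_le_PkBar K k (by rw [← comap_MLoc K, ← comap_PkLoc K k]; exact Ideal.comap_mono h)

lemma PkLoc_lt_MLoc (k : S) : PkLoc K k < MLoc K S :=
  lt_of_le_of_ne (prime_le_MLoc K _ (PkLoc_isPrime K k))
    (fun h => not_MLoc_le_PkLoc K k (h ▸ le_refl _))

lemma lXk_mem_MLoc (k : S) :
    algebraMap QQ L (Ideal.Quotient.mk (prodXIdeal K S) (X k)) ∈ MLoc K S :=
  Ideal.mem_map_of_mem _ (mkX_mem_mxBar K k)

lemma lXk_mem_PkLoc {j k : S} (h : j ≠ k) :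
    algebraMap QQ L (Ideal.Quotient.mk (prodXIdeal K S) (X j)) ∈ PkLoc K k :=
  Ideal.mem_map_of_mem _ (mkX_mem_PkBar K h)

lemma lXk_not_mem_PkLoc (k : S) :
    algebraMap QQ L (Ideal.Quotient.mk (prodXIdeal K S) (X k)) ∉ PkLoc K k := by
  intro h
  exact mkX_not_mem_PkBar K k (by rw [← comap_PkLoc K k]; exact h)

end Loc

section Final

local notation "L" => Localization.AtPrime (mxBar K S)
local notation "QQ" => MvPolynomial S K ⧸ prodXIdeal K S

lemma no_three_chain (a b c : PrimeSpectrum L) (hab : a < b) (hbc : b < c) : False := by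
  rcases classify_loc K b.asIdeal b.isPrime with hb | ⟨k, hb⟩
  · have h1 : c.asIdeal ≤ b.asIdeal := hb ▸ prime_le_MLoc K c.asIdeal c.isPrime
    exact absurd h1 (not_le_of_gt ((PrimeSpectrum.asIdeal_lt_asIdeal b c).mpr hbc))
  · rcases classify_loc K a.asIdeal a.isPrime with ha | ⟨j, ha⟩
    · have h1 : a.asIdeal < b.asIdeal := (PrimeSpectrum.asIdeal_lt_asIdeal a b).mpr hab
      rw [ha, hb] at h1
      exact not_MLoc_le_PkLoc K k (le_of_lt h1)
    · have h1 : a.asIdeal < b.asIdeal := (PrimeSpectrum.asIdeal_lt_asIdeal a b).mpr hab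
      rw [ha, hb] at h1
      have := PkLoc_le_PkLoc K (le_of_lt h1)
      subst this
      exact lt_irrefl _ h1


end Final
end AuxStmt19
/-- Let `K` be a field, `S` an infinite set, `T = K[xᵢ : i ∈ S]`, `I = (xᵢxₖ : i ≠ k)`,
`𝔪 = (xᵢ : i ∈ S)`, and `R` the localization of `T/I` at the maximal ideal `𝔪/I`.
Then `R` is a reduced local ring of Krull dimension `1` with infinitely many minimal
primes, satisfying infinite prime absorbance: every prime of `R` containing an
intersection of a family of primes of `R` contains a member of the family. -/


local notation "L" => Localization.AtPrime (mxBar K S)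
local notation "QQ" => MvPolynomial S K ⧸ prodXIdeal K S

theorem stmt_19 [Infinite S] :
    IsReduced (Localization.AtPrime (mxBar K S)) ∧
      IsLocalRing (Localization.AtPrime (mxBar K S)) ∧
      ringKrullDim (Localization.AtPrime (mxBar K S)) = 1 ∧
      (minimalPrimes (Localization.AtPrime (mxBar K S))).Infinite ∧
      ∀ F : Set (Ideal (Localization.AtPrime (mxBar K S))), (∀ q ∈ F, q.IsPrime) →
        ∀ P : Ideal (Localization.AtPrime (mxBar K S)), P.IsPrime →
          sInf F ≤ P → ∃ q ∈ F, q ≤ P := by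
  haveI hred : IsReduced QQ := quotient_reduced K
  refine ⟨inferInstance, inferInstance, ?_, ?_, ?_⟩
  · -- dimension
    obtain ⟨k₀⟩ := (inferInstance : Nonempty S)
    apply le_antisymm
    · rw [ringKrullDim, Order.krullDim_eq_iSup_length]
      refine (WithBot.coe_le_coe (b := (1 : ℕ∞))).mpr ?_
      apply iSup_le
      intro p
      by_contra hlen
      push_neg at hlen
      have h2 : 1 < p.length := by exact_mod_cast hlen
      have hab := p.strictMono (show (⟨0, by omega⟩ : Fin (p.length + 1)) < ⟨1, by omega⟩ by
        exact Fin.mk_lt_mk.mpr (by omega))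
      have hbc := p.strictMono (show (⟨1, by omega⟩ : Fin (p.length + 1)) < ⟨2, by omega⟩ by
        exact Fin.mk_lt_mk.mpr (by omega))
      exact no_three_chain K _ _ _ hab hbc
    · have hchain : (1 : WithBot (WithTop ℕ)) ≤ ringKrullDim L := by
        let c : LTSeries (PrimeSpectrum L) :=
          ⟨1, ![⟨PkLoc K k₀, PkLoc_isPrime K k₀⟩, ⟨MLoc K S, MLoc_isPrime K (S := S)⟩], by
            intro i
            fin_cases i
            simp only [Fin.castSucc, Fin.succ]
            show (⟨PkLoc K k₀, _⟩ : PrimeSpectrum L) < ⟨MLoc K S, _⟩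
            rw [← PrimeSpectrum.asIdeal_lt_asIdeal]
            exact PkLoc_lt_MLoc K k₀⟩
        have := Order.LTSeries.length_le_krullDim c
        simp [ringKrullDim, c] at this; exact this
      exact hchain
  · -- infinitely many minimal primes
    have hmin : ∀ k : S, PkLoc K k ∈ minimalPrimes L := by
      intro k
      rw [minimalPrimes_eq_minimals]
      constructor
      · exact PkLoc_isPrime K k
      · intro b hb hble
        rcases classify_loc K b hb with rfl | ⟨j, rfl⟩
        · exact absurd hble (not_MLoc_le_PkLoc K k)
        · have := PkLoc_le_PkLoc K hble
          subst this
          exact le_rfl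
    exact Set.infinite_of_injective_forall_mem
      (f := fun k : S => PkLoc K k)
      (fun j k h => PkLoc_le_PkLoc K (le_of_eq h)) hmin
  · -- absorbance
    intro F hF P hP hle
    rcases Set.eq_empty_or_nonempty F with rfl | ⟨q0, hq0⟩
    · rw [sInf_empty] at hle
      exact absurd (top_le_iff.mp hle) hP.ne_top
    rcases classify_loc K P hP with rfl | ⟨k, rfl⟩
    · exact ⟨q0, hq0, prime_le_MLoc K q0 (hF q0 hq0)⟩
    · by_contra hcon
      push_neg at hcon
      have hx : ∀ q ∈ F,
          algebraMap QQ L (Ideal.Quotient.mk (prodXIdeal K S) (X k)) ∈ q := by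
        intro q hq
        rcases classify_loc K q (hF q hq) with rfl | ⟨j, rfl⟩
        · exact lXk_mem_MLoc K k
        · rcases eq_or_ne j k with rfl | hjk
          · exact absurd le_rfl (hcon _ hq)
          · exact lXk_mem_PkLoc K (Ne.symm hjk)
      have hmem : algebraMap QQ L (Ideal.Quotient.mk (prodXIdeal K S) (X k)) ∈ sInf F :=
        Ideal.mem_sInf.mpr fun q hq => hx q hq
      exact lXk_not_mem_PkLoc K k (hle hmem)
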